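/- For any Borel probability measures σ, μ on ℝ and any real t ≥ 1, one has 𝔸^∨_σ(μ^{⊠∨ t}) = (𝔸^∨_σ(μ))^{⊠∨ t}, i.e., the subordination operation commutes with the free max-convolution power. -/

import Mathlib

open MeasureTheory ProbabilityTheory Filter Topology

/-- The subordination distribution function for free max-convolution:
`max {1 - (1 - Fμ)/Fσ, 0}`, set to `0` where `Fσ = 0`. -/
noncomputable def subFn (Fμ Fσ : ℝ → ℝ) (x : ℝ) : ℝ :=
  if Fσ x = 0 then 0 else max (1 - (1 - Fμ x) / Fσ x) 0

theorem subordination_freeMaxPow (σ μ : Measure ℝ)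
    [IsProbabilityMeasure σ] [IsProbabilityMeasure μ]
    (t : ℝ) (ht : 1 ≤ t)
    (m A L R : Measure ℝ)
    [IsProbabilityMeasure m] [IsProbabilityMeasure A]
    [IsProbabilityMeasure L] [IsProbabilityMeasure R]
    -- m = μ^{⊠∨ t}
    (hm : ∀ x, cdf m x = max (t * cdf μ x - (t - 1)) 0)
    -- L = 𝔸^∨_σ(μ^{⊠∨ t})
    (hL : ∀ x, cdf L x = subFn (cdf m) (cdf σ) x)
    -- A = 𝔸^∨_σ(μ)
    (hA : ∀ x, cdf A x = subFn (cdf μ) (cdf σ) x)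
    -- R = (𝔸^∨_σ(μ))^{⊠∨ t}
    (hR : ∀ x, cdf R x = max (t * cdf A x - (t - 1)) 0) :
    L = R := by
  have key : ∀ x, cdf L x = cdf R x := by
    intro x
    rw [hL, hR, hA]
    unfold subFn
    rw [hm x]
    set s := cdf σ x with hs
    set u := cdf μ x with hu
    have hs0 : 0 ≤ s := cdf_nonneg σ x
    have hs1 : s ≤ 1 := cdf_le_one σ x
    have hu0 : 0 ≤ u := cdf_nonneg μ x
    have hu1 : u ≤ 1 := cdf_le_one μ x
    by_cases h : s = 0
    · simp [h]; linarith
    · have hspos : 0 < s := lt_of_le_of_ne hs0 (Ne.symm h)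
      simp only [h, if_false]
      set a := 1 - (1 - u) / s with ha
      by_cases h2 : t * u - (t - 1) ≥ 0
      · have hmax : max (t * u - (t - 1)) 0 = t * u - (t - 1) := max_eq_left h2
        rw [hmax]
        have key2 : 1 - (1 - (t * u - (t - 1))) / s = t * a - (t - 1) := by
          field_simp [ha]
          rw [ha]; field_simp; ring
        rw [key2]
        by_cases h3 : a ≥ 0
        · rw [max_eq_left h3]
        · have h3' : a < 0 := not_le.mp h3
          rw [max_eq_right h3'.le]
          have : t * a - (t - 1) ≤ 0 := by nlinarith
          rw [max_eq_right this, max_eq_right (by linarith)]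
      · have h2' : t * u - (t - 1) < 0 := not_le.mp h2
        rw [max_eq_right h2'.le]
        have hL0 : 1 - (1 - 0) / s ≤ 0 := by
          have : 1 ≤ 1 / s := by rw [le_div_iff₀ hspos]; linarith
          simpa using this
        rw [max_eq_right hL0]
        have hau : a ≤ u := by
          have h1u : 0 ≤ 1 - u := by linarith
          have : 1 - u ≤ (1 - u) / s := by
            rw [le_div_iff₀ hspos]; nlinarith
          simp only [ha]; linarith
        have : t * max a 0 - (t - 1) ≤ 0 := by
          rcases le_or_gt a 0 with h4 | h4
          · rw [max_eq_right h4]; linarith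
          · rw [max_eq_left h4.le]; nlinarith
        rw [max_eq_right this]
  have : ∀ x, L (Set.Iic x) = R (Set.Iic x) := by
    intro x
    have h1 : cdf L x = (L (Set.Iic x)).toReal := cdf_eq_real (μ := L) x
    have h2 : cdf R x = (R (Set.Iic x)).toReal := cdf_eq_real (μ := R) x
    have hfin1 : L (Set.Iic x) ≠ ⊤ := measure_ne_top _ _
    have hfin2 : R (Set.Iic x) ≠ ⊤ := measure_ne_top _ _
    rw [← ENNReal.toReal_eq_toReal_iff' hfin1 hfin2, ← h1, ← h2]
    exact key x
  exact Measure.ext_of_Iic L R this
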